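/- The determinant of the m×m symmetric tridiagonal matrix with diagonal entries n_i + n_{i+1} and off-diagonal entries −n_{i+1} (for positive reals n_1,…,n_{m+1}) equals (∏_{i=1}^{m+1} n_i)·(∑_{i=1}^{m+1} 1/n_i). -/

import Mathlib

def tri (m : ℕ) (n : Fin (m + 1) → ℝ) : Matrix (Fin m) (Fin m) ℝ :=
  Matrix.of fun i j =>
    if i = j then n i.castSucc + n i.succ
    else if (i : ℕ) + 1 = j then -n j.castSucc
    else if (j : ℕ) + 1 = i then -n i.castSucc
    else 0

lemma tri_apply (m : ℕ) (n : Fin (m + 1) → ℝ) (i j : Fin m) :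
    tri m n i j =
      if (i : ℕ) = (j : ℕ) then n ⟨i, by omega⟩ + n ⟨i + 1, by omega⟩
      else if (i : ℕ) + 1 = (j : ℕ) then -n ⟨j, by omega⟩
      else if (j : ℕ) + 1 = (i : ℕ) then -n ⟨i, by omega⟩
      else 0 := by
  have hc : i.castSucc = (⟨(i : ℕ), by omega⟩ : Fin (m + 1)) := rfl
  have hs : i.succ = (⟨(i : ℕ) + 1, by omega⟩ : Fin (m + 1)) := rfl
  have hcj : j.castSucc = (⟨(j : ℕ), by omega⟩ : Fin (m + 1)) := rfl
  simp only [tri, Matrix.of_apply, Fin.ext_iff, hc, hs, hcj]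

set_option maxHeartbeats 1000000 in
lemma tri_det : ∀ (m : ℕ) (n : Fin (m + 1) → ℝ), (∀ i, 0 < n i) →
    (tri m n).det = (∏ i, n i) * (∑ i, 1 / n i)
  | 0, n, hn => by
      have h0 : n 0 ≠ 0 := (hn 0).ne'
      simp [Matrix.det_fin_zero]
      field_simp
  | 1, n, hn => by
      have h0 : n 0 ≠ 0 := (hn 0).ne'
      have h1 : n 1 ≠ 0 := (hn 1).ne'
      rw [Matrix.det_fin_one, tri_apply]
      simp [Fin.sum_univ_two, Fin.prod_univ_two]
      field_simp
      ring
  | (k+2), n, hn => by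
      have hs : n 0 + n 1 ≠ 0 := (add_pos (hn 0) (hn 1)).ne'
      have hs' : n 1 + n 0 ≠ 0 := (add_pos (hn 1) (hn 0)).ne'
      have h0 : n 0 ≠ 0 := (hn 0).ne'
      have h1 : n 1 ≠ 0 := (hn 1).ne'
      set A := tri (k+2) n with hAdef
      set B := A.updateRow 1 (A 1 + (n 1 / (n 0 + n 1)) • A 0) with hB
      have h10 : (1 : Fin (k+2)) ≠ 0 := by
        simp [Fin.ext_iff]
      have hdet : A.det = B.det := (Matrix.det_updateRow_add_smul_self A h10 _).symm
      set n' : Fin (k+2) → ℝ :=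
        fun i => if (i : ℕ) = 0 then n 0 * n 1 / (n 0 + n 1) else n ⟨(i : ℕ) + 1, by omega⟩
        with hn'
      have hn'pos : ∀ i, 0 < n' i := by
        intro i
        rw [hn']
        dsimp only
        split
        · exact div_pos (mul_pos (hn 0) (hn 1)) (add_pos (hn 0) (hn 1))
        · exact hn _
      -- values of n at mk-indices
      have hval1 : n ⟨1, by omega⟩ = n 1 := by congr 1
      have hval0 : n ⟨0, by omega⟩ = n 0 := by congr 1
      have hsub : B.submatrix Fin.succ Fin.succ = tri (k+1) n' := by
        ext i j
        rcases i with ⟨iv, hiv⟩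
        rcases j with ⟨jv, hjv⟩
        rw [Matrix.submatrix_apply, tri_apply]
        by_cases hi0 : iv = 0
        · subst hi0
          have h1 : Fin.succ (⟨0, hiv⟩ : Fin (k+1)) = 1 := by
            apply Fin.ext; simp
          rw [h1, hB, Matrix.updateRow_self]
          simp only [Pi.add_apply, Pi.smul_apply, smul_eq_mul, hAdef, tri_apply, hn',
            Fin.val_succ, Fin.val_zero, Fin.val_one, Fin.val_mk, hval0, hval1]
          by_cases hj0 : jv = 0
          · subst hj0
            norm_num
            field_simp [hs, hs']
            ring
          · by_cases hj1 : jv = 1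
            · subst hj1
              norm_num
            · split_ifs <;>
                first | omega | contradiction | ring
        · have hne : Fin.succ (⟨iv, hiv⟩ : Fin (k+1)) ≠ 1 := by
            intro h
            have := congrArg Fin.val h
            simp only [Fin.val_succ, Fin.val_one, Fin.val_mk] at this
            omega
          rw [hB, Matrix.updateRow_ne hne, hAdef, tri_apply]
          simp only [hn', Fin.val_succ, Fin.val_mk, Fin.val_zero, Fin.val_one]
          split_ifs <;>
            first | omega | contradiction | rfl
      have hcol : ∀ i : Fin (k+2), i ≠ 0 → B i 0 = 0 := by
        intro i hi
        by_cases hi1 : i = 1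
        · subst hi1
          rw [hB, Matrix.updateRow_self]
          simp only [Pi.add_apply, Pi.smul_apply, smul_eq_mul, hAdef, tri_apply,
            Fin.val_zero, Fin.val_one, hval0, hval1]
          norm_num
          field_simp
          ring
        · rw [hB, Matrix.updateRow_ne hi1, hAdef, tri_apply]
          have hv : (i : ℕ) ≠ 0 := fun h => hi (Fin.ext h)
          have h1v : (i : ℕ) ≠ 1 := fun h => hi1 (Fin.ext (by simp [h]))
          simp only [Fin.val_zero]
          split_ifs <;> first | omega | contradiction | rfl | exact if_neg ‹_›
      have hB00 : B 0 0 = n 0 + n 1 := by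
        rw [hB, Matrix.updateRow_ne (Ne.symm h10), hAdef, tri_apply]
        simp [hval1, hval0]
      have hexp : B.det = (n 0 + n 1) * (tri (k+1) n').det := by
        rw [Matrix.det_succ_column_zero]
        rw [Finset.sum_eq_single 0]
        · rw [Fin.succAbove_zero, hsub, hB00]
          simp
        · intro b _ hb
          rw [hcol b hb]
          ring
        · intro h
          exact absurd (Finset.mem_univ _) h
      rw [hdet, hexp, tri_det (k+1) n' hn'pos]
      -- final algebra
      have hn'0 : n' 0 = n 0 * n 1 / (n 0 + n 1) := by simp [hn']
      have hseq : ∀ i : Fin (k+1), n' i.succ = n i.succ.succ := by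
        intro i
        simp only [hn', Fin.val_succ]
        rw [if_neg (by omega)]
        exact congrArg n (Fin.ext (by simp [Fin.val_succ]))
      have hprod : (∏ i, n' i)
          = (n 0 * n 1 / (n 0 + n 1)) * ∏ i : Fin (k+1), n i.succ.succ := by
        rw [Fin.prod_univ_succ, hn'0, Finset.prod_congr rfl (fun i _ => hseq i)]
      have hsum : (∑ i, 1 / n' i)
          = (n 0 + n 1) / (n 0 * n 1) + ∑ i : Fin (k+1), 1 / n i.succ.succ := by
        rw [Fin.sum_univ_succ, hn'0, one_div_div,
          Finset.sum_congr rfl (fun i _ => by rw [hseq i])]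
      have hprodn : (∏ i, n i) = n 0 * (n 1 * ∏ i : Fin (k+1), n i.succ.succ) := by
        rw [Fin.prod_univ_succ, Fin.prod_univ_succ, Fin.succ_zero_eq_one]
      have hsumn : (∑ i, 1 / n i)
          = 1 / n 0 + (1 / n 1 + ∑ i : Fin (k+1), 1 / n i.succ.succ) := by
        rw [Fin.sum_univ_succ, Fin.sum_univ_succ, Fin.succ_zero_eq_one]
      rw [hprod, hsum, hprodn, hsumn]
      field_simp
      ring

theorem det_weighted_tridiag (m : ℕ) (n : Fin (m + 1) → ℝ)
    (hn : ∀ i, 0 < n i)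
    (A : Matrix (Fin m) (Fin m) ℝ)
    (hA : ∀ i j : Fin m,
      A i j =
        if i = j then n i.castSucc + n i.succ
        else if (i : ℕ) + 1 = j then -n j.castSucc
        else if (j : ℕ) + 1 = i then -n i.castSucc
        else 0) :
    A.det = (∏ i, n i) * (∑ i, 1 / n i) := by
  have : A = tri m n := by
    ext i j
    rw [hA i j]
    rfl
  rw [this]
  exact tri_det m n hn
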